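/- Let (p_{i,j}) be a non-degenerate model with small steps and zero drift and let K(x,y) = Σ_{(i,j)} p_{i,j} x^{1−i} y^{1−j} − xy ∈ ℂ[x,y] be its kernel. If N ∈ ℂ[x,y] is a polynomial that vanishes at every point (x₀,y₀) ∈ ℂ² with K(x₀,y₀) = 0, then K divides N in ℂ[x,y]. -/

import Mathlib

open Finset

/-- The set of possible small steps `{-1,0,1} × {-1,0,1}` (the step `(0,0)` is excluded
via the support condition of the model). -/
def SmallStepGrid : Finset (ℤ × ℤ) := ({-1, 0, 1} : Finset ℤ) ×ˢ ({-1, 0, 1} : Finset ℤ)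

/-- A model with small steps: nonnegative weights `p i j` supported on
`{-1,0,1}² \ {(0,0)}` summing to `1`. -/
structure SmallStepModel where
  p : ℤ → ℤ → ℝ
  nonneg : ∀ u v, 0 ≤ p u v
  supp : ∀ u v, p u v ≠ 0 → ((u, v) ∈ SmallStepGrid ∧ (u, v) ≠ (0, 0))
  sum_one : ∑ uv ∈ SmallStepGrid, p uv.1 uv.2 = 1

/-- Zero drift: both coordinates of the mean step vanish. -/
def SmallStepModel.ZeroDrift (M : SmallStepModel) : Prop :=
  (∑ uv ∈ SmallStepGrid, (uv.1 : ℝ) * M.p uv.1 uv.2 = 0) ∧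
  (∑ uv ∈ SmallStepGrid, (uv.2 : ℝ) * M.p uv.1 uv.2 = 0)

/-- The cyclic list of the eight boundary weights. -/
def SmallStepModel.cyc (M : SmallStepModel) : Fin 8 → ℝ :=
  ![M.p 1 1, M.p 1 0, M.p 1 (-1), M.p 0 (-1), M.p (-1) (-1), M.p (-1) 0, M.p (-1) 1,
    M.p 0 1]

/-- Non-degeneracy: the cyclic list of the eight weights contains no
three consecutive zeros. -/
def SmallStepModel.NonDegenerate (M : SmallStepModel) : Prop :=
  ∀ k : Fin 8, ¬(M.cyc k = 0 ∧ M.cyc (k + 1) = 0 ∧ M.cyc (k + 2) = 0)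


/-- The kernel `K(x,y) = Σ_{(i,j)} p_{i,j} x^{1−i} y^{1−j} − xy` of the model, as a
polynomial in `ℂ[x,y]`. -/
noncomputable def kernelPoly (M : SmallStepModel) : MvPolynomial (Fin 2) ℂ :=
  (∑ uv ∈ SmallStepGrid, MvPolynomial.C ((M.p uv.1 uv.2 : ℝ) : ℂ) *
      MvPolynomial.X 0 ^ (1 - uv.1).toNat * MvPolynomial.X 1 ^ (1 - uv.2).toNat)
    - MvPolynomial.X 0 * MvPolynomial.X 1




noncomputable def pc (M : SmallStepModel) (u v : ℤ) : ℂ := ((M.p u v : ℝ) : ℂ)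

lemma p00 (M : SmallStepModel) : M.p 0 0 = 0 := by
  by_contra h; exact (M.supp 0 0 h).2 rfl

open MvPolynomial in
lemma kernel_eq (M : SmallStepModel) : kernelPoly M =
    C (pc M (-1) 1) * X 0 ^ 2 + C (pc M (-1) 0) * X 0 ^ 2 * X 1 +
    C (pc M (-1) (-1)) * X 0 ^ 2 * X 1 ^ 2 +
    C (pc M 0 1) * X 0 + C (pc M 0 (-1)) * X 0 * X 1 ^ 2 +
    C (pc M 1 1) + C (pc M 1 0) * X 1 + C (pc M 1 (-1)) * X 1 ^ 2 -
    X 0 * X 1 := by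
  have h00 : pc M 0 0 = 0 := by simp [pc, p00]
  rw [kernelPoly]
  rw [show SmallStepGrid = ({-1, 0, 1} : Finset ℤ) ×ˢ ({-1, 0, 1} : Finset ℤ) from rfl]
  rw [Finset.sum_product]
  simp only [Finset.sum_insert, Finset.mem_insert, Finset.mem_singleton, Finset.sum_singleton]
  norm_num [pc]
  have h0 : ((M.p 0 0 : ℝ) : ℂ) = 0 := by rw [p00]; norm_num
  rw [h0, show Int.toNat 2 = 2 from rfl]
  simp only [map_zero, mul_zero, zero_mul]
  ring

open Polynomial

noncomputable def e2 : MvPolynomial (Fin 2) ℂ ≃ₐ[ℂ] Polynomial (Polynomial ℂ) :=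
  (MvPolynomial.finSuccEquiv ℂ 1).trans
    (Polynomial.mapAlgEquiv ((MvPolynomial.finSuccEquiv ℂ 0).trans
      (Polynomial.mapAlgEquiv (MvPolynomial.isEmptyAlgEquiv ℂ (Fin 0)))))

lemma e2_X0 : e2 (MvPolynomial.X 0) = Polynomial.X := by
  rw [e2, AlgEquiv.trans_apply, MvPolynomial.finSuccEquiv_X_zero,
    Polynomial.coe_mapAlgEquiv, Polynomial.map_X]

lemma e2_X1 : e2 (MvPolynomial.X 1) = Polynomial.C Polynomial.X := by
  rw [e2, AlgEquiv.trans_apply, show (1 : Fin 2) = (0 : Fin 1).succ from rfl,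
    MvPolynomial.finSuccEquiv_X_succ, Polynomial.coe_mapAlgEquiv, Polynomial.map_C]
  simp [MvPolynomial.finSuccEquiv_X_zero, Polynomial.coe_mapAlgEquiv]

lemma e2_C (r : ℂ) : e2 (MvPolynomial.C r) = Polynomial.C (Polynomial.C r) := by
  have h := e2.commutes r
  rw [MvPolynomial.algebraMap_eq] at h
  rw [h]
  simp [Polynomial.algebraMap_apply, MvPolynomial.algebraMap_eq]

noncomputable def polyA (M : SmallStepModel) : Polynomial ℂ :=
  C (pc M (-1) 1) + C (pc M (-1) 0) * X + C (pc M (-1) (-1)) * X ^ 2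
noncomputable def polyB (M : SmallStepModel) : Polynomial ℂ :=
  C (pc M 0 1) - X + C (pc M 0 (-1)) * X ^ 2
noncomputable def polyCc (M : SmallStepModel) : Polynomial ℂ :=
  C (pc M 1 1) + C (pc M 1 0) * X + C (pc M 1 (-1)) * X ^ 2
noncomputable def KP (M : SmallStepModel) : Polynomial (Polynomial ℂ) :=
  C (polyA M) * X ^ 2 + C (polyB M) * X + C (polyCc M)

lemma e2_kernel (M : SmallStepModel) : e2 (kernelPoly M) = KP M := by
  rw [kernel_eq]
  simp only [map_sub, map_add, map_mul, map_pow, e2_X0, e2_X1, e2_C]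
  rw [KP, polyA, polyB, polyCc]
  simp only [map_add, map_sub, map_mul, map_pow]
  ring

lemma key1' (a0 a1 a2 b0 b2 c0 u v : ℝ)
    (ha0 : 0 ≤ a0) (ha1 : 0 ≤ a1) (ha2 : 0 ≤ a2) (hb0 : 0 ≤ b0) (hb2 : 0 ≤ b2)
    (hAre : a0 + a1 * u + a2 * (u * u - v * v) = 0)
    (hAim : a1 * v + a2 * (u * v + v * u) = 0)
    (hBre : b0 - u + b2 * (u * u - v * v) = 0)
    (hBim : -v + b2 * (u * v + v * u) = 0)
    (hC0 : u = 0 → v = 0 → c0 = 0) :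
    (a0 = 0 ∧ a1 = 0 ∧ a2 = 0) ∨ (a0 = 0 ∧ b0 = 0 ∧ c0 = 0) := by
  by_cases hv : v = 0
  · subst hv
    by_cases hu : u = 0
    · subst hu
      right
      refine ⟨by nlinarith, by nlinarith, hC0 rfl rfl⟩
    · have hunn : 0 ≤ u := by nlinarith
      have hupos : 0 < u := lt_of_le_of_ne hunn (Ne.symm hu)
      have hq2 : 0 ≤ a2 * (u * u) := mul_nonneg ha2 (mul_nonneg hunn hunn)
      have hq1 : 0 ≤ a1 * u := mul_nonneg ha1 hunn
      have ha1' : a1 = 0 := by nlinarith [mul_pos hupos hupos]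
      have ha2' : a2 = 0 := by nlinarith [mul_pos hupos hupos]
      left
      refine ⟨by nlinarith, ha1', ha2'⟩
  · have h3 : v * (2 * b2 * u - 1) = 0 := by linear_combination hBim
    have h4 : 2 * b2 * u = 1 := by
      rcases mul_eq_zero.1 h3 with h | h
      · exact absurd h hv
      · linarith
    have hupos : 0 < u := by nlinarith
    have h5 : v * (a1 + 2 * a2 * u) = 0 := by linear_combination hAim
    have h6 : a1 + 2 * a2 * u = 0 := by
      rcases mul_eq_zero.1 h5 with h | h
      · exact absurd h hv
      · linarith
    have ha1' : a1 = 0 := by nlinarith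
    have ha2' : a2 = 0 := by nlinarith
    left
    refine ⟨by nlinarith, ha1', ha2'⟩


lemma cyc_spec (M : SmallStepModel) : M.cyc 0 = M.p 1 1 ∧ M.cyc 1 = M.p 1 0 ∧
    M.cyc 2 = M.p 1 (-1) ∧ M.cyc 3 = M.p 0 (-1) ∧ M.cyc 4 = M.p (-1) (-1) ∧
    M.cyc 5 = M.p (-1) 0 ∧ M.cyc 6 = M.p (-1) 1 ∧ M.cyc 7 = M.p 0 1 :=
  ⟨rfl, rfl, rfl, rfl, rfl, rfl, rfl, rfl⟩

lemma no_common_root (M : SmallStepModel) (hnd : M.NonDegenerate) (y : ℂ)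
    (hA : (polyA M).eval y = 0) (hB : (polyB M).eval y = 0)
    (hC : (polyCc M).eval y = 0) : False := by
  simp only [polyA, polyB, polyCc, pc, Polynomial.eval_add, Polynomial.eval_sub,
    Polynomial.eval_mul, Polynomial.eval_pow, Polynomial.eval_C, Polynomial.eval_X] at hA hB hC
  have hAre := congrArg Complex.re hA
  have hAim := congrArg Complex.im hA
  have hBre := congrArg Complex.re hB
  have hBim := congrArg Complex.im hB
  simp only [pow_two, Complex.add_re, Complex.add_im, Complex.sub_re, Complex.sub_im,
    Complex.mul_re, Complex.mul_im, Complex.ofReal_re, Complex.ofReal_im,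
    Complex.zero_re, Complex.zero_im] at hAre hAim hBre hBim
  have hC0 : y.re = 0 → y.im = 0 → M.p 1 1 = 0 := by
    intro h1 h2
    have hy : y = 0 := Complex.ext h1 h2
    subst hy
    simp only [mul_zero, ne_eq, OfNat.ofNat_ne_zero, not_false_eq_true, zero_pow,
      add_zero] at hC
    exact_mod_cast hC
  have key := key1' (M.p (-1) 1) (M.p (-1) 0) (M.p (-1) (-1)) (M.p 0 1) (M.p 0 (-1))
    (M.p 1 1) y.re y.im (M.nonneg _ _) (M.nonneg _ _) (M.nonneg _ _) (M.nonneg _ _)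
    (M.nonneg _ _) (by linarith) (by linarith) (by linarith) (by linarith) hC0
  rcases key with ⟨h1, h2, h3⟩ | ⟨h1, h2, h3⟩
  · exact hnd 4 ⟨h3, h2, h1⟩
  · exact hnd 6 ⟨h1, h2, h3⟩


lemma mul_expand (p0 p1 p2 q0 q1 q2 : ℂ) :
    (C p0 + C p1 * X + C p2 * X ^ 2) * (C q0 + C q1 * X + C q2 * X ^ 2) =
    C (p0 * q0) + C (p0 * q1 + p1 * q0) * X + C (p0 * q2 + p1 * q1 + p2 * q0) * X ^ 2 +
      C (p1 * q2 + p2 * q1) * X ^ 3 + C (p2 * q2) * X ^ 4 := by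
  simp only [map_add, map_mul]; ring

lemma pos_pos {x y : ℝ} (hx : 0 ≤ x) (hy : 0 ≤ y) (h : 0 < x * y) : 0 < x ∧ 0 < y :=
  ⟨by nlinarith, by nlinarith⟩

lemma zero_of_mul_left {x y : ℝ} (h : x * y = 0) (hx : 0 < x) : y = 0 := by
  rcases mul_eq_zero.1 h with h' | h'
  · exact absurd h' (ne_of_gt hx)
  · exact h'

lemma zero_of_mul_right {x y : ℝ} (h : x * y = 0) (hy : 0 < y) : x = 0 := by
  rcases mul_eq_zero.1 h with h' | h'
  · exact h'
  · exact absurd h' (ne_of_gt hy)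

lemma key2' (a0 a1 a2 b0 b2 c0 c1 c2 : ℝ)
    (ha0 : 0 ≤ a0) (ha1 : 0 ≤ a1) (ha2 : 0 ≤ a2) (hb0 : 0 ≤ b0) (hb2 : 0 ≤ b2)
    (hc0 : 0 ≤ c0) (hc1 : 0 ≤ c1) (hc2 : 0 ≤ c2)
    (E0 : b0 * b0 = 4 * (a0 * c0))
    (E1 : -b0 + -b0 = 4 * (a0 * c1 + a1 * c0))
    (E2 : b0 * b2 + 1 + b2 * b0 = 4 * (a0 * c2 + a1 * c1 + a2 * c0))
    (E3 : -b2 + -b2 = 4 * (a1 * c2 + a2 * c1))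
    (E4 : b2 * b2 = 4 * (a2 * c2)) :
    (c1 = 0 ∧ c2 = 0 ∧ b2 = 0) ∨ (c2 = 0 ∧ b2 = 0 ∧ a2 = 0) ∨ (b2 = 0 ∧ a2 = 0 ∧ a1 = 0) := by
  have m01 : 0 ≤ a0 * c1 := mul_nonneg ha0 hc1
  have m10 : 0 ≤ a1 * c0 := mul_nonneg ha1 hc0
  have m12 : 0 ≤ a1 * c2 := mul_nonneg ha1 hc2
  have m21 : 0 ≤ a2 * c1 := mul_nonneg ha2 hc1
  have m02 : 0 ≤ a0 * c2 := mul_nonneg ha0 hc2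
  have m11 : 0 ≤ a1 * c1 := mul_nonneg ha1 hc1
  have m20 : 0 ≤ a2 * c0 := mul_nonneg ha2 hc0
  have hb0z : b0 = 0 := by linarith
  have hb2z : b2 = 0 := by linarith
  subst hb0z; subst hb2z
  have h00 : a0 * c0 = 0 := by linarith
  have h22 : a2 * c2 = 0 := by linarith
  have h12 : a1 * c2 = 0 := by linarith
  have h21 : a2 * c1 = 0 := by linarith
  have hsum : a0 * c2 + a1 * c1 + a2 * c0 = 1 / 4 := by linarith
  by_cases h11z : a1 * c1 = 0
  · by_cases h02z : a0 * c2 = 0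
    · have hpos : 0 < a2 * c0 := by linarith
      obtain ⟨ha2p, hc0p⟩ := pos_pos ha2 hc0 hpos
      exact Or.inl ⟨zero_of_mul_left h21 ha2p, zero_of_mul_left h22 ha2p, rfl⟩
    · have hpos : 0 < a0 * c2 := lt_of_le_of_ne m02 (Ne.symm h02z)
      obtain ⟨ha0p, hc2p⟩ := pos_pos ha0 hc2 hpos
      exact Or.inr (Or.inr ⟨rfl, zero_of_mul_right h22 hc2p, zero_of_mul_right h12 hc2p⟩)
  · have hpos : 0 < a1 * c1 := lt_of_le_of_ne m11 (Ne.symm h11z)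
    obtain ⟨ha1p, hc1p⟩ := pos_pos ha1 hc1 hpos
    exact Or.inr (Or.inl ⟨zero_of_mul_left h12 ha1p, rfl, zero_of_mul_right h21 hc1p⟩)

lemma disc_ne_zero (M : SmallStepModel) (hnd : M.NonDegenerate) :
    polyB M ^ 2 - 4 * (polyA M * polyCc M) ≠ 0 := by
  intro hd
  have h : polyB M ^ 2 = 4 * (polyA M * polyCc M) := by linear_combination hd
  have hBform : polyB M = C (pc M 0 1) + C (-1 : ℂ) * X + C (pc M 0 (-1)) * X ^ 2 := by
    rw [polyB]; simp only [map_neg, map_one]; ring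
  rw [pow_two, hBform, polyA, polyCc, mul_expand, mul_expand,
    (map_ofNat (Polynomial.C : ℂ →+* Polynomial ℂ) 4).symm] at h
  have h0 := congrArg (fun q => Polynomial.coeff q 0) h
  have h1 := congrArg (fun q => Polynomial.coeff q 1) h
  have h2 := congrArg (fun q => Polynomial.coeff q 2) h
  have h3 := congrArg (fun q => Polynomial.coeff q 3) h
  have h4 := congrArg (fun q => Polynomial.coeff q 4) h
  simp only [Polynomial.coeff_add, Polynomial.coeff_C_mul, Polynomial.coeff_X_pow,
    Polynomial.coeff_C, Polynomial.coeff_X, Polynomial.coeff_mul_C] at h0 h1 h2 h3 h4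
  norm_num at h0 h1 h2 h3 h4
  simp only [pc] at h0 h1 h2 h3 h4
  have E0 : M.p 0 1 * M.p 0 1 = 4 * (M.p (-1) 1 * M.p 1 1) := by exact_mod_cast h0
  have E1 : -M.p 0 1 + -M.p 0 1 = 4 * (M.p (-1) 1 * M.p 1 0 + M.p (-1) 0 * M.p 1 1) := by
    exact_mod_cast h1
  have E2 : M.p 0 1 * M.p 0 (-1) + 1 + M.p 0 (-1) * M.p 0 1 =
      4 * (M.p (-1) 1 * M.p 1 (-1) + M.p (-1) 0 * M.p 1 0 + M.p (-1) (-1) * M.p 1 1) := by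
    exact_mod_cast h2
  have E3 : -M.p 0 (-1) + -M.p 0 (-1) = 4 * (M.p (-1) 0 * M.p 1 (-1) + M.p (-1) (-1) * M.p 1 0) := by
    exact_mod_cast h3
  have E4 : M.p 0 (-1) * M.p 0 (-1) = 4 * (M.p (-1) (-1) * M.p 1 (-1)) := by exact_mod_cast h4
  rcases key2' (M.p (-1) 1) (M.p (-1) 0) (M.p (-1) (-1)) (M.p 0 1) (M.p 0 (-1))
      (M.p 1 1) (M.p 1 0) (M.p 1 (-1)) (M.nonneg _ _) (M.nonneg _ _) (M.nonneg _ _)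
      (M.nonneg _ _) (M.nonneg _ _) (M.nonneg _ _) (M.nonneg _ _) (M.nonneg _ _)
      E0 E1 E2 E3 E4 with ⟨g1, g2, g3⟩ | ⟨g1, g2, g3⟩ | ⟨g1, g2, g3⟩
  · exact hnd 1 ⟨g1, g2, g3⟩
  · exact hnd 2 ⟨g1, g2, g3⟩
  · exact hnd 3 ⟨g1, g2, g3⟩


lemma polyA_ne_zero (M : SmallStepModel) (hnd : M.NonDegenerate) : polyA M ≠ 0 := by
  intro h
  have h0 := congrArg (fun q => Polynomial.coeff q 0) h
  have h1 := congrArg (fun q => Polynomial.coeff q 1) h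
  have h2 := congrArg (fun q => Polynomial.coeff q 2) h
  simp only [polyA, Polynomial.coeff_add, Polynomial.coeff_C_mul, Polynomial.coeff_X_pow,
    Polynomial.coeff_C, Polynomial.coeff_X, Polynomial.coeff_zero] at h0 h1 h2
  norm_num [pc] at h0 h1 h2
  exact hnd 4 ⟨by exact_mod_cast h2, by exact_mod_cast h1, by exact_mod_cast h0⟩

lemma coeff_KP (M : SmallStepModel) :
    (KP M).coeff 2 = polyA M ∧ (KP M).coeff 1 = polyB M ∧ (KP M).coeff 0 = polyCc M := by
  refine ⟨?_, ?_, ?_⟩ <;>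
    simp [KP, Polynomial.coeff_add, Polynomial.coeff_C_mul, Polynomial.coeff_X_pow,
      Polynomial.coeff_C, Polynomial.coeff_X]

lemma KP_ne_zero (M : SmallStepModel) (hnd : M.NonDegenerate) : KP M ≠ 0 := by
  intro h
  exact polyA_ne_zero M hnd (by rw [← (coeff_KP M).1, h, Polynomial.coeff_zero])

noncomputable abbrev Ffield := FractionRing (Polynomial ℂ)
noncomputable abbrev ψf : Polynomial ℂ →+* Ffield := algebraMap (Polynomial ℂ) Ffield
noncomputable abbrev φf : Polynomial (Polynomial ℂ) →+* Polynomial Ffield :=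
  Polynomial.mapRingHom ψf

set_option maxHeartbeats 1000000 in
set_option synthInstance.maxHeartbeats 400000 in
lemma KP_map_separable (M : SmallStepModel) (hnd : M.NonDegenerate) :
    (φf (KP M)).Separable := by
  set A' := ψf (polyA M) with hA'
  set B' := ψf (polyB M) with hB'
  set C' := ψf (polyCc M) with hC'
  have hφKP : φf (KP M) = C A' * X ^ 2 + C B' * X + C C' := by
    simp [KP, φf, Polynomial.map_add, Polynomial.map_mul, Polynomial.map_pow,
      Polynomial.map_C, Polynomial.map_X]
    rfl
  have hd : B' ^ 2 - 4 * (A' * C') ≠ 0 := by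
    have hinj : Function.Injective ψf := IsFractionRing.injective _ _
    intro h
    apply disc_ne_zero M hnd
    apply hinj
    rw [map_sub, map_pow, map_mul, map_mul, map_ofNat, map_zero]
    exact h
  have hder : Polynomial.derivative (φf (KP M)) = C (2 * A') * X + C B' := by
    rw [hφKP]
    simp [Polynomial.derivative_add, Polynomial.derivative_C_mul]
    ring_nf
    rw [map_ofNat C 2]
  rw [Polynomial.Separable]
  refine ⟨C (-(4 * A') * (B' ^ 2 - 4 * (A' * C'))⁻¹),
    (C (2 * A') * X + C B') * C (B' ^ 2 - 4 * (A' * C'))⁻¹, ?_⟩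
  rw [hder, hφKP]
  have key : C (-(4 * A') * (B' ^ 2 - 4 * (A' * C'))⁻¹) * (C A' * X ^ 2 + C B' * X + C C') +
      (C (2 * A') * X + C B') * C (B' ^ 2 - 4 * (A' * C'))⁻¹ * (C (2 * A') * X + C B') =
      C ((B' ^ 2 - 4 * (A' * C')) * (B' ^ 2 - 4 * (A' * C'))⁻¹) := by
    simp only [map_mul, map_neg, map_sub, map_add, map_pow, map_ofNat]
    ring
  rw [key, mul_inv_cancel₀ hd, map_one]

set_option maxHeartbeats 1000000 in
set_option synthInstance.maxHeartbeats 400000 in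
lemma KP_squarefree (M : SmallStepModel) (hnd : M.NonDegenerate) : Squarefree (KP M) := by
  have hsfF : Squarefree (φf (KP M)) := (KP_map_separable M hnd).squarefree
  intro q hq
  have hq0 : q ≠ 0 := by
    rintro rfl
    exact KP_ne_zero M hnd (zero_dvd_iff.1 (by simpa using hq))
  have hmap : φf q * φf q ∣ φf (KP M) := by
    rw [← map_mul]; exact map_dvd φf hq
  have hu : IsUnit (φf q) := hsfF _ hmap
  obtain ⟨r, hr, hrC⟩ := Polynomial.isUnit_iff.1 hu
  have hinj : Function.Injective ψf := IsFractionRing.injective _ _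
  have hdeg : q.degree ≤ 0 := by
    rw [← Polynomial.degree_map_eq_of_injective hinj q]
    rw [show Polynomial.map ψf q = φf q from rfl, ← hrC]
    exact Polynomial.degree_C_le
  have hqC : q = Polynomial.C (q.coeff 0) := Polynomial.eq_C_of_degree_le_zero hdeg
  set g := q.coeff 0 with hg
  have hgdvd : ∀ i, g ∣ (KP M).coeff i := by
    intro i
    have : Polynomial.C g ∣ KP M := dvd_trans ⟨Polynomial.C g, by rw [← hqC]⟩ hq
    exact (Polynomial.C_dvd_iff_dvd_coeff g (KP M)).1 this i
  have hgu : IsUnit g := by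
    by_contra hgnu
    have hg0 : g ≠ 0 := fun h => hq0 (by rw [hqC, h, map_zero])
    have hdegne : g.degree ≠ 0 := fun h => hgnu (Polynomial.isUnit_iff_degree_eq_zero.2 h)
    have hdegg : 0 < g.degree :=
      lt_of_le_of_ne (Polynomial.zero_le_degree_iff.2 hg0) (Ne.symm hdegne)
    obtain ⟨z, hz⟩ := Complex.exists_root hdegg
    have evalz : ∀ i, g ∣ (KP M).coeff i → Polynomial.eval z ((KP M).coeff i) = 0 := by
      intro i hi
      obtain ⟨t, ht⟩ := hi
      rw [ht, Polynomial.eval_mul, hz, zero_mul]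
    obtain ⟨hc2, hc1, hc0⟩ := coeff_KP M
    exact no_common_root M hnd z (by rw [← hc2]; exact evalz 2 (hgdvd 2))
      (by rw [← hc1]; exact evalz 1 (hgdvd 1)) (by rw [← hc0]; exact evalz 0 (hgdvd 0))
  rw [hqC]
  exact Polynomial.isUnit_C.2 hgu

lemma kernel_squarefree (M : SmallStepModel) (hnd : M.NonDegenerate) :
    Squarefree (kernelPoly M) := by
  have hsf : Squarefree (e2 (kernelPoly M)) := by rw [e2_kernel]; exact KP_squarefree M hnd
  intro q hq
  have : e2 q * e2 q ∣ e2 (kernelPoly M) := by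
    obtain ⟨c, hc⟩ := hq
    exact ⟨e2 c, by rw [← map_mul, ← map_mul, hc]⟩
  have hu := hsf _ this
  have := hu.map e2.symm.toAlgHom
  simpa using this


set_option linter.unusedVariables false

/-- For a non-degenerate model with small steps and zero drift, any polynomial
`N ∈ ℂ[x,y]` vanishing at every complex zero of the kernel `K` is divisible by `K`. -/
theorem kernel_dvd_of_vanishing_on_kernel_curve (M : SmallStepModel)
    (hnd : M.NonDegenerate) (hzd : M.ZeroDrift)
    (N : MvPolynomial (Fin 2) ℂ)
    (hvanish : ∀ a : Fin 2 → ℂ,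
      MvPolynomial.eval a (kernelPoly M) = 0 → MvPolynomial.eval a N = 0) :
    kernelPoly M ∣ N := by
  have hsf : Squarefree (kernelPoly M) := kernel_squarefree M hnd
  have hmem : N ∈ (Ideal.span {kernelPoly M}).radical := by
    rw [← MvPolynomial.vanishingIdeal_zeroLocus_eq_radical (K := ℂ)]
    intro x hx
    exact hvanish x (hx _ (Ideal.subset_span rfl))
  obtain ⟨n, hn⟩ := Ideal.mem_radical_iff.1 hmem
  have hdvd : kernelPoly M ∣ N ^ n := (Ideal.mem_span_singleton).1 hn
  rcases Nat.eq_zero_or_pos n with h0 | hpos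
  · subst h0
    rw [pow_zero] at hdvd
    exact (isUnit_of_dvd_one hdvd).dvd
  · exact (hsf.dvd_pow_iff_dvd (Nat.pos_iff_ne_zero.1 hpos)).1 hdvd
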